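/- Let n ≥ 3 and let F be a family of subsets of {1,...,n} with ∅ ∉ F and {1,...,n} ∉ F, such that there are no four distinct members A, B, C, D ∈ F with A ∪ B ⊆ C ∩ D. Then Σ_{F∈F} 1/C(n,|F|) ≤ 2. -/

import Mathlib

open Finset

namespace DKS
variable {n : ℕ}

def pref (σ : Equiv.Perm (Fin n)) (k : ℕ) : Finset (Fin n) :=
  (Finset.univ.filter fun j : Fin n => (j : ℕ) < k).image σ

lemma pref_trans (σ π : Equiv.Perm (Fin n)) (k : ℕ) :
    pref (σ.trans π) k = (pref σ k).image π := by
  simp [pref, Finset.image_image, Equiv.coe_trans]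

lemma pref_mono (σ : Equiv.Perm (Fin n)) {k l : ℕ} (h : k ≤ l) :
    pref σ k ⊆ pref σ l := by
  apply Finset.image_subset_image
  intro j hj
  simp only [Finset.mem_filter] at *
  exact ⟨hj.1, lt_of_lt_of_le hj.2 h⟩

lemma card_base (k : ℕ) (h : k ≤ n) :
    ((Finset.univ : Finset (Fin n)).filter fun j : Fin n => (j : ℕ) < k).card = k := by
  have := Finset.card_bij' (s := (Finset.univ : Finset (Fin n)).filter fun j : Fin n => (j : ℕ) < k)
    (t := Finset.range k) (fun j _ => (j : ℕ))
    (fun m hm => (⟨m, lt_of_lt_of_le (Finset.mem_range.mp hm) h⟩ : Fin n))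
    ?_ ?_ ?_ ?_
  · rw [this, Finset.card_range]
  · intro a ha
    simp only [Finset.mem_filter] at ha
    exact Finset.mem_range.mpr ha.2
  · intro m hm
    simp [Finset.mem_range.mp hm]
  · intro a _; rfl
  · intro m _; rfl

lemma card_pref (σ : Equiv.Perm (Fin n)) {k : ℕ} (h : k ≤ n) :
    (pref σ k).card = k := by
  rw [pref, Finset.card_image_of_injective _ σ.injective, card_base k h]


lemma transport {A B A' B' : Finset (Fin n)} (hAB : A ⊆ B) (hA'B' : A' ⊆ B')
    (ha : A.card = A'.card) (hb : B.card = B'.card) :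
    ∃ π : Equiv.Perm (Fin n), A.image π = A' ∧ B.image π = B' := by
  classical
  have hd : (B \ A).card = (B' \ A').card := by
    rw [Finset.card_sdiff_of_subset hAB, Finset.card_sdiff_of_subset hA'B', ha, hb]
  have hc : (Bᶜ : Finset (Fin n)).card = (B'ᶜ : Finset (Fin n)).card := by
    rw [Finset.card_compl, Finset.card_compl, hb]
  let e1 := Finset.equivOfCardEq ha
  let e2 := Finset.equivOfCardEq hd
  let e3 := Finset.equivOfCardEq hc
  let f : Fin n → Fin n := fun x =>
    if h1 : x ∈ A then e1 ⟨x, h1⟩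
    else if h2 : x ∈ B then e2 ⟨x, Finset.mem_sdiff.mpr ⟨h2, h1⟩⟩
    else e3 ⟨x, Finset.mem_compl.mpr h2⟩
  let g : Fin n → Fin n := fun y =>
    if h1 : y ∈ A' then e1.symm ⟨y, h1⟩
    else if h2 : y ∈ B' then e2.symm ⟨y, Finset.mem_sdiff.mpr ⟨h2, h1⟩⟩
    else e3.symm ⟨y, Finset.mem_compl.mpr h2⟩
  have hmem1 : ∀ (z : {x // x ∈ A'}), (z : Fin n) ∈ A' := fun z => z.2
  have hgf : ∀ x, g (f x) = x := by
    intro x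
    by_cases h1 : x ∈ A
    · have : f x = e1 ⟨x, h1⟩ := by simp [f, h1]
      rw [this]
      have hy : (e1 ⟨x, h1⟩ : Fin n) ∈ A' := (e1 ⟨x, h1⟩).2
      simp only [g, hy, dif_pos]
      have : (⟨(e1 ⟨x, h1⟩ : Fin n), hy⟩ : {y // y ∈ A'}) = e1 ⟨x, h1⟩ := Subtype.ext rfl
      rw [this, Equiv.symm_apply_apply]
    · by_cases h2 : x ∈ B
      · have : f x = e2 ⟨x, Finset.mem_sdiff.mpr ⟨h2, h1⟩⟩ := by simp [f, h1, h2]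
        rw [this]
        set z := e2 ⟨x, Finset.mem_sdiff.mpr ⟨h2, h1⟩⟩ with hz
        have hz2 := z.2
        rw [Finset.mem_sdiff] at hz2
        have hy1 : (z : Fin n) ∉ A' := fun hc' => hz2.2 hc'
        have hy2 : (z : Fin n) ∈ B' := hz2.1
        show g (z : Fin n) = x
        simp only [g]
        rw [dif_neg hy1, dif_pos hy2, Subtype.coe_eta, hz, Equiv.symm_apply_apply]
      · have : f x = e3 ⟨x, Finset.mem_compl.mpr h2⟩ := by simp [f, h1, h2]
        rw [this]
        set z := e3 ⟨x, Finset.mem_compl.mpr h2⟩ with hz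
        have hz2 := Finset.mem_compl.mp z.2
        have hy1 : (z : Fin n) ∉ A' := fun hc' => hz2 (hA'B' hc')
        show g (z : Fin n) = x
        simp only [g]
        rw [dif_neg hy1, dif_neg hz2, Subtype.coe_eta, hz, Equiv.symm_apply_apply]
  have hfg : ∀ y, f (g y) = y := by
    intro y
    by_cases h1 : y ∈ A'
    · have : g y = e1.symm ⟨y, h1⟩ := by simp [g, h1]
      rw [this]
      have hy : (e1.symm ⟨y, h1⟩ : Fin n) ∈ A := (e1.symm ⟨y, h1⟩).2
      simp only [f, hy, dif_pos]
      have : (⟨(e1.symm ⟨y, h1⟩ : Fin n), hy⟩ : {x // x ∈ A}) = e1.symm ⟨y, h1⟩ := Subtype.ext rfl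
      rw [this, Equiv.apply_symm_apply]
    · by_cases h2 : y ∈ B'
      · have : g y = e2.symm ⟨y, Finset.mem_sdiff.mpr ⟨h2, h1⟩⟩ := by simp [g, h1, h2]
        rw [this]
        set z := e2.symm ⟨y, Finset.mem_sdiff.mpr ⟨h2, h1⟩⟩ with hz
        have hz2 := z.2
        rw [Finset.mem_sdiff] at hz2
        have hy1 : (z : Fin n) ∉ A := hz2.2
        have hy2 : (z : Fin n) ∈ B := hz2.1
        show f (z : Fin n) = y
        simp only [f]
        rw [dif_neg hy1, dif_pos hy2, Subtype.coe_eta, hz, Equiv.apply_symm_apply]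
      · have : g y = e3.symm ⟨y, Finset.mem_compl.mpr h2⟩ := by simp [g, h1, h2]
        rw [this]
        set z := e3.symm ⟨y, Finset.mem_compl.mpr h2⟩ with hz
        have hz2 := Finset.mem_compl.mp z.2
        have hy1 : (z : Fin n) ∉ A := fun hc' => hz2 (hAB hc')
        show f (z : Fin n) = y
        simp only [f]
        rw [dif_neg hy1, dif_neg hz2, Subtype.coe_eta, hz, Equiv.apply_symm_apply]
  let π : Equiv.Perm (Fin n) := ⟨f, g, hgf, hfg⟩
  refine ⟨π, ?_, ?_⟩
  · apply Finset.eq_of_subset_of_card_le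
    · intro y hy
      rw [Finset.mem_image] at hy
      obtain ⟨x, hx, rfl⟩ := hy
      show f x ∈ A'
      simp only [f, hx, dif_pos]
      exact (e1 ⟨x, hx⟩).2
    · rw [Finset.card_image_of_injective _ π.injective, ha]
  · apply Finset.eq_of_subset_of_card_le
    · intro y hy
      rw [Finset.mem_image] at hy
      obtain ⟨x, hx, rfl⟩ := hy
      show f x ∈ B'
      by_cases h1 : x ∈ A
      · simp only [f, h1, dif_pos]
        exact hA'B' (e1 ⟨x, h1⟩).2
      · simp only [f, h1, hx, dif_pos, dif_neg]
        exact (Finset.mem_sdiff.mp (e2 ⟨x, Finset.mem_sdiff.mpr ⟨hx, h1⟩⟩).2).1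
    · rw [Finset.card_image_of_injective _ π.injective, hb]


lemma card_pref_pair (π : Equiv.Perm (Fin n)) (k l : ℕ) {S T S' T' : Finset (Fin n)}
    (hS : S.image π = S') (hT : T.image π = T') :
    (Finset.univ.filter fun σ : Equiv.Perm (Fin n) => pref σ k = S ∧ pref σ l = T).card
      = (Finset.univ.filter fun σ : Equiv.Perm (Fin n) => pref σ k = S' ∧ pref σ l = T').card := by
  classical
  have himg : ∀ (U U' : Finset (Fin n)), U.image π = U' → U'.image π.symm = U := by
    intro U U' h
    rw [← h, Finset.image_image]
    simp [Finset.image_id']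
  refine Finset.card_bij' (fun σ _ => σ.trans π) (fun τ _ => τ.trans π.symm) ?_ ?_ ?_ ?_
  · intro σ hσ
    simp only [Finset.mem_filter, Finset.mem_univ, true_and] at hσ
    simp only [Finset.mem_filter, Finset.mem_univ, true_and, pref_trans]
    rw [hσ.1, hσ.2]
    exact ⟨hS, hT⟩
  · intro τ hτ
    simp only [Finset.mem_filter, Finset.mem_univ, true_and] at hτ
    simp only [Finset.mem_filter, Finset.mem_univ, true_and, pref_trans]
    rw [hτ.1, hτ.2]
    exact ⟨himg _ _ hS, himg _ _ hT⟩
  · intro σ _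
    ext x
    simp
  · intro τ _
    ext x
    simp

lemma card_pref_single (π : Equiv.Perm (Fin n)) (k : ℕ) {S S' : Finset (Fin n)}
    (hS : S.image π = S') :
    (Finset.univ.filter fun σ : Equiv.Perm (Fin n) => pref σ k = S).card
      = (Finset.univ.filter fun σ : Equiv.Perm (Fin n) => pref σ k = S').card := by
  classical
  have h1 : (Finset.univ.filter fun σ : Equiv.Perm (Fin n) => pref σ k = S)
      = Finset.univ.filter fun σ : Equiv.Perm (Fin n) => pref σ k = S ∧ pref σ k = S := by
    apply Finset.filter_congr
    intro σ _
    constructor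
    · exact fun h => ⟨h, h⟩
    · exact fun h => h.1
  have h2 : (Finset.univ.filter fun σ : Equiv.Perm (Fin n) => pref σ k = S')
      = Finset.univ.filter fun σ : Equiv.Perm (Fin n) => pref σ k = S' ∧ pref σ k = S' := by
    apply Finset.filter_congr
    intro σ _
    constructor
    · exact fun h => ⟨h, h⟩
    · exact fun h => h.1
  rw [h1, h2]
  exact card_pref_pair π k k hS hS

/-- number of permutations whose prefix of size `S.card` is `S`, times `n.choose S.card`,
equals `n!`. -/
lemma card_T_mul_choose (S : Finset (Fin n)) :
    (Finset.univ.filter fun σ : Equiv.Perm (Fin n) => pref σ S.card = S).card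
      * n.choose S.card = n.factorial := by
  classical
  set k := S.card with hk
  have hkn : k ≤ n := by
    rw [hk]
    simpa using Finset.card_le_univ S
  have hcard : (Finset.univ : Finset (Equiv.Perm (Fin n))).card
      = ∑ S' ∈ Finset.powersetCard k (Finset.univ : Finset (Fin n)),
        (Finset.univ.filter fun σ : Equiv.Perm (Fin n) => pref σ k = S').card := by
    apply Finset.card_eq_sum_card_fiberwise
    intro σ _
    rw [Finset.mem_coe, Finset.mem_powersetCard]
    exact ⟨Finset.subset_univ _, card_pref σ hkn⟩
  have hconst : ∀ S' ∈ Finset.powersetCard k (Finset.univ : Finset (Fin n)),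
      (Finset.univ.filter fun σ : Equiv.Perm (Fin n) => pref σ k = S').card
        = (Finset.univ.filter fun σ : Equiv.Perm (Fin n) => pref σ k = S).card := by
    intro S' hS'
    rw [Finset.mem_powersetCard] at hS'
    have hcc : S.card = S'.card := by rw [hS'.2, hk]
    obtain ⟨π, hπ, -⟩ := transport (Finset.subset_univ S) (Finset.subset_univ S') hcc rfl
    exact (card_pref_single π k hπ).symm
  rw [Finset.sum_congr rfl hconst, Finset.sum_const, smul_eq_mul] at hcard
  simp only [Finset.card_powersetCard, Finset.card_univ, Fintype.card_fin,
    Fintype.card_perm] at hcard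
  rw [mul_comm]
  exact hcard.symm


lemma exists_top {α : Type*} [DecidableEq α] (G : Finset (Finset α))
    (htot : ∀ S ∈ G, ∀ T ∈ G, S ⊆ T ∨ T ⊆ S) (hne : G.Nonempty) :
    ∃ M ∈ G, ∀ S ∈ G, S ⊆ M := by
  obtain ⟨M, hM, hmax⟩ := G.exists_max_image Finset.card hne
  refine ⟨M, hM, fun S hS => ?_⟩
  rcases htot S hS M hM with h | h
  · exact h
  · exact (Finset.eq_of_subset_of_card_le h (hmax S hS)).ge

lemma exists_chain3 {α : Type*} [DecidableEq α] (G : Finset (Finset α))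
    (htot : ∀ S ∈ G, ∀ T ∈ G, S ⊆ T ∨ T ⊆ S) (h3 : 3 ≤ G.card) :
    ∃ P Q R, P ∈ G ∧ Q ∈ G ∧ R ∈ G ∧ P ⊂ Q ∧ Q ⊂ R := by
  obtain ⟨R, hR, hRtop⟩ := exists_top G htot (Finset.card_pos.mp (by omega))
  set G1 := G.erase R with hG1
  have hG1sub : G1 ⊆ G := Finset.erase_subset _ _
  have hc1 : 2 ≤ G1.card := by
    rw [hG1, Finset.card_erase_of_mem hR]
    omega
  obtain ⟨Q, hQ, hQtop⟩ := exists_top G1 (fun S hS T hT => htot S (hG1sub hS) T (hG1sub hT))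
    (Finset.card_pos.mp (by omega))
  set G2 := G1.erase Q with hG2
  have hG2sub : G2 ⊆ G1 := Finset.erase_subset _ _
  have hc2 : 1 ≤ G2.card := by
    rw [hG2, Finset.card_erase_of_mem hQ]
    omega
  obtain ⟨P, hP⟩ := Finset.card_pos.mp (by omega : 0 < G2.card)
  refine ⟨P, Q, R, hG1sub (hG2sub hP), hG1sub hQ, hR, ?_, ?_⟩
  · exact (hQtop P (hG2sub hP)).ssubset_of_ne (Finset.ne_of_mem_erase hP)
  · exact (hRtop Q (hG1sub hQ)).ssubset_of_ne (Finset.ne_of_mem_erase hQ)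

lemma exists_chain4 {α : Type*} [DecidableEq α] (G : Finset (Finset α))
    (htot : ∀ S ∈ G, ∀ T ∈ G, S ⊆ T ∨ T ⊆ S) (h4 : 4 ≤ G.card) :
    ∃ P Q R S, P ∈ G ∧ Q ∈ G ∧ R ∈ G ∧ S ∈ G ∧ P ⊂ Q ∧ Q ⊂ R ∧ R ⊂ S := by
  obtain ⟨S, hS, hStop⟩ := exists_top G htot (Finset.card_pos.mp (by omega))
  set G1 := G.erase S with hG1
  have hG1sub : G1 ⊆ G := Finset.erase_subset _ _
  have hc1 : 3 ≤ G1.card := by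
    rw [hG1, Finset.card_erase_of_mem hS]
    omega
  obtain ⟨P, Q, R, hP, hQ, hR, hPQ, hQR⟩ :=
    exists_chain3 G1 (fun A hA B hB => htot A (hG1sub hA) B (hG1sub hB)) hc1
  refine ⟨P, Q, R, S, hG1sub hP, hG1sub hQ, hG1sub hR, hS, hPQ, hQR, ?_⟩
  exact (hStop R (hG1sub hR)).ssubset_of_ne (Finset.ne_of_mem_erase hR)

end DKS
theorem stmt_1 (n : ℕ) (hn : 3 ≤ n) (F : Finset (Finset (Fin n)))
    (hempty : ∅ ∉ F) (hfull : (Finset.univ : Finset (Fin n)) ∉ F)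
    (hstar : ∀ A ∈ F, ∀ B ∈ F, ∀ C ∈ F, ∀ D ∈ F,
      A ≠ B → A ≠ C → A ≠ D → B ≠ C → B ≠ D → C ≠ D → ¬ (A ∪ B ⊆ C ∩ D)) :
    ∑ S ∈ F, (1 : ℚ) / (n.choose S.card) ≤ 2 := by
  classical
  set Ω := (Finset.univ : Finset (Equiv.Perm (Fin n))) with hΩ
  set G : Equiv.Perm (Fin n) → Finset (Finset (Fin n)) :=
    fun σ => F.filter (fun S => DKS.pref σ S.card = S) with hG
  set c : Equiv.Perm (Fin n) → ℕ := fun σ => (G σ).card with hc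
  have hGmem : ∀ σ S, S ∈ G σ ↔ S ∈ F ∧ DKS.pref σ S.card = S := by
    intro σ S
    simp [hG, Finset.mem_filter]
  have htot : ∀ σ, ∀ S ∈ G σ, ∀ T ∈ G σ, S ⊆ T ∨ T ⊆ S := by
    intro σ S hS T hT
    rw [hGmem] at hS hT
    rcases le_total S.card T.card with h | h
    · left
      rw [← hS.2, ← hT.2]
      exact DKS.pref_mono σ h
    · right
      rw [← hS.2, ← hT.2]
      exact DKS.pref_mono σ h
  -- no four-chains: c σ ≤ 3
  have hc3 : ∀ σ, c σ ≤ 3 := by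
    intro σ
    by_contra hcon
    push_neg at hcon
    obtain ⟨P, Q, R, S, hP, hQ, hR, hS, hPQ, hQR, hRS⟩ :=
      DKS.exists_chain4 (G σ) (htot σ) hcon
    rw [hGmem] at hP hQ hR hS
    refine hstar P hP.1 Q hQ.1 R hR.1 S hS.1 hPQ.ne ((hPQ.trans hQR).ne)
      ((hPQ.trans (hQR.trans hRS)).ne) hQR.ne ((hQR.trans hRS).ne) hRS.ne ?_
    refine Finset.union_subset (hPQ.subset.trans (Finset.subset_inter hQR.subset
      (hQR.subset.trans hRS.subset))) (Finset.subset_inter hQR.subset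
      (hQR.subset.trans hRS.subset))
  -- uniqueness lemmas
  have hAuniq : ∀ B ∈ F, ∀ C ∈ F, B ⊂ C → ∀ A1 ∈ F, ∀ A2 ∈ F, A1 ⊂ B → A2 ⊂ B → A1 = A2 := by
    intro B hB C hC hBC A1 h1 A2 h2 hA1 hA2
    by_contra hne
    refine hstar A1 h1 A2 h2 B hB C hC hne hA1.ne ((hA1.trans hBC).ne) hA2.ne
      ((hA2.trans hBC).ne) hBC.ne ?_
    exact Finset.union_subset (Finset.subset_inter hA1.subset (hA1.subset.trans hBC.subset))
      (Finset.subset_inter hA2.subset (hA2.subset.trans hBC.subset))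
  have hCuniq : ∀ B ∈ F, ∀ A ∈ F, A ⊂ B → ∀ C1 ∈ F, ∀ C2 ∈ F, B ⊂ C1 → B ⊂ C2 → C1 = C2 := by
    intro B hB A hA hAB C1 h1 C2 h2 hC1 hC2
    by_contra hne
    refine hstar A hA B hB C1 h1 C2 h2 hAB.ne ((hAB.trans hC1).ne) ((hAB.trans hC2).ne)
      hC1.ne hC2.ne hne ?_
    refine Finset.union_subset ?_ ?_
    · exact Finset.subset_inter (hAB.subset.trans hC1.subset) (hAB.subset.trans hC2.subset)
    · exact Finset.subset_inter hC1.subset hC2.subset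
  set Mid : Finset (Finset (Fin n)) :=
    F.filter (fun B => (∃ A ∈ F, A ⊂ B) ∧ (∃ C ∈ F, B ⊂ C)) with hMid
  set badB : Finset (Fin n) → Finset (Equiv.Perm (Fin n)) :=
    fun B => Ω.filter (fun σ => 3 ≤ c σ ∧ DKS.pref σ B.card = B) with hbadB
  set goodB : Finset (Fin n) → Finset (Equiv.Perm (Fin n)) :=
    fun B => Ω.filter (fun σ => c σ = 1 ∧ DKS.pref σ B.card = B) with hgoodB
  set Bad : Finset (Equiv.Perm (Fin n)) := Ω.filter (fun σ => 3 ≤ c σ) with hBad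
  set Good : Finset (Equiv.Perm (Fin n)) := Mid.biUnion goodB with hGood
  -- Mid is an antichain
  have hMidAnti : ∀ B ∈ Mid, ∀ B' ∈ Mid, B ⊆ B' → B = B' := by
    intro B hB B' hB' hsub
    by_contra hne
    rw [hMid, Finset.mem_filter] at hB hB'
    obtain ⟨hBF, ⟨A0, hA0, hA0B⟩, -⟩ := hB
    obtain ⟨hB'F, -, ⟨C0, hC0, hB'C0⟩⟩ := hB'
    have hBB' : B ⊂ B' := hsub.ssubset_of_ne hne
    refine hstar A0 hA0 B hBF B' hB'F C0 hC0 hA0B.ne ((hA0B.trans hBB').ne)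
      ((hA0B.trans (hBB'.trans hB'C0)).ne) hne ((hBB'.trans hB'C0).ne) hB'C0.ne ?_
    refine Finset.union_subset ?_ ?_
    · exact Finset.subset_inter (hA0B.subset.trans hBB'.subset)
        ((hA0B.subset.trans hBB'.subset).trans hB'C0.subset)
    · exact Finset.subset_inter hBB'.subset (hBB'.subset.trans hB'C0.subset)
  -- Bad is covered by the badB's
  have hBadsub : Bad ⊆ Mid.biUnion badB := by
    intro σ hσ
    rw [hBad, Finset.mem_filter] at hσ
    obtain ⟨-, hσ3⟩ := hσ
    obtain ⟨P, Q, R, hP, hQ, hR, hPQ, hQR⟩ := DKS.exists_chain3 (G σ) (htot σ) hσ3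
    rw [Finset.mem_biUnion]
    rw [hGmem] at hP hQ hR
    refine ⟨Q, ?_, ?_⟩
    · rw [hMid, Finset.mem_filter]
      exact ⟨hQ.1, ⟨P, hP.1, hPQ⟩, ⟨R, hR.1, hQR⟩⟩
    · rw [hbadB, Finset.mem_filter]
      exact ⟨Finset.mem_univ _, hσ3, hQ.2⟩
  -- disjointness of the badB's / goodB's over Mid
  have hmemG : ∀ σ (B : Finset (Fin n)), B ∈ F → DKS.pref σ B.card = B → B ∈ G σ := by
    intro σ B h1 h2
    rw [hGmem]; exact ⟨h1, h2⟩
  have hbadDisj : ∀ B ∈ Mid, ∀ B' ∈ Mid, B ≠ B' → Disjoint (badB B) (badB B') := by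
    intro B hB B' hB' hne
    rw [Finset.disjoint_left]
    intro σ hσ hσ'
    rw [hbadB, Finset.mem_filter] at hσ hσ'
    have hBF : B ∈ F := (Finset.mem_filter.mp hB).1
    have hB'F : B' ∈ F := (Finset.mem_filter.mp hB').1
    have h1 := hmemG σ B hBF hσ.2.2
    have h2 := hmemG σ B' hB'F hσ'.2.2
    rcases htot σ B h1 B' h2 with h | h
    · exact hne (hMidAnti B hB B' hB' h)
    · exact hne (hMidAnti B' hB' B hB h).symm
  have hgoodDisj : ∀ B ∈ Mid, ∀ B' ∈ Mid, B ≠ B' → Disjoint (goodB B) (goodB B') := by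
    intro B hB B' hB' hne
    rw [Finset.disjoint_left]
    intro σ hσ hσ'
    rw [hgoodB, Finset.mem_filter] at hσ hσ'
    have hBF : B ∈ F := (Finset.mem_filter.mp hB).1
    have hB'F : B' ∈ F := (Finset.mem_filter.mp hB').1
    have h1 := hmemG σ B hBF hσ.2.2
    have h2 := hmemG σ B' hB'F hσ'.2.2
    have : 1 < c σ := Finset.one_lt_card.mpr ⟨B, h1, B', h2, hne⟩
    omega
  -- the key estimate per middle set
  have hkey : ∀ B ∈ Mid, (badB B).card ≤ (goodB B).card := by
    intro B hB
    rw [hMid, Finset.mem_filter] at hB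
    obtain ⟨hBF, ⟨A, hAF, hAB⟩, ⟨C, hCF, hBC⟩⟩ := hB
    have hA0 : 0 < A.card := by
      rw [Finset.card_pos, Finset.nonempty_iff_ne_empty]
      intro h; exact hempty (h ▸ hAF)
    have hab : A.card < B.card := Finset.card_lt_card hAB
    have hbc : B.card < C.card := Finset.card_lt_card hBC
    have hcn : C.card < n := by
      have hne : C ≠ Finset.univ := fun h => hfull (h ▸ hCF)
      have := Finset.card_lt_card ((Finset.subset_univ C).ssubset_of_ne hne)
      simpa using this
    set X := Ω.filter (fun σ => DKS.pref σ B.card = B ∧ DKS.pref σ A.card = A) with hX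
    set Y := Ω.filter (fun σ => DKS.pref σ B.card = B ∧ DKS.pref σ C.card = C) with hY
    set T := Ω.filter (fun σ => DKS.pref σ B.card = B) with hT
    have hXT : X ⊆ T := by
      intro σ hσ
      rw [hX, Finset.mem_filter] at hσ
      rw [hT, Finset.mem_filter]
      exact ⟨hσ.1, hσ.2.1⟩
    have hYT : Y ⊆ T := by
      intro σ hσ
      rw [hY, Finset.mem_filter] at hσ
      rw [hT, Finset.mem_filter]
      exact ⟨hσ.1, hσ.2.1⟩
    -- 2|X| ≤ |T|
    have hX2 : 2 * X.card ≤ T.card := by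
      obtain ⟨x, hx⟩ := Finset.card_pos.mp hA0
      obtain ⟨y, hyB, hyA⟩ := Finset.exists_of_ssubset hAB
      set A₂ := insert y (A.erase x) with hA₂
      have hA₂B : A₂ ⊆ B := by
        rw [hA₂]
        exact Finset.insert_subset hyB ((Finset.erase_subset _ _).trans hAB.subset)
      have hA₂card : A.card = A₂.card := by
        rw [hA₂, Finset.card_insert_of_notMem (fun h => hyA (Finset.mem_of_mem_erase h)),
          Finset.card_erase_of_mem hx]
        omega
      have hA₂ne : A₂ ≠ A := by
        intro h
        exact hyA (h ▸ Finset.mem_insert_self y _)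
      obtain ⟨π, hπA, hπB⟩ := DKS.transport hAB.subset hA₂B hA₂card rfl
      have hcards := DKS.card_pref_pair π B.card A.card hπB hπA
      set X' := Ω.filter (fun σ => DKS.pref σ B.card = B ∧ DKS.pref σ A.card = A₂) with hX'
      have hXX' : X.card = X'.card := hcards
      have hdisj : Disjoint X X' := by
        rw [Finset.disjoint_left]
        intro σ hσ hσ'
        rw [hX, Finset.mem_filter] at hσ
        rw [hX', Finset.mem_filter] at hσ'
        exact hA₂ne (hσ'.2.2.symm.trans hσ.2.2)
      have hsub : X ∪ X' ⊆ T := by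
        refine Finset.union_subset hXT ?_
        intro σ hσ
        rw [hX', Finset.mem_filter] at hσ
        rw [hT, Finset.mem_filter]
        exact ⟨hσ.1, hσ.2.1⟩
      have := Finset.card_le_card hsub
      rw [Finset.card_union_of_disjoint hdisj] at this
      omega
    -- 2|Y| ≤ |T|
    have hY2 : 2 * Y.card ≤ T.card := by
      obtain ⟨x, hxC, hxB⟩ := Finset.exists_of_ssubset hBC
      have : ∃ y, y ∉ C := by
        by_contra h
        push_neg at h
        have : C = Finset.univ := Finset.eq_univ_iff_forall.mpr h
        exact hfull (this ▸ hCF)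
      obtain ⟨y, hyC⟩ := this
      set C₂ := insert y (C.erase x) with hC₂
      have hBC₂ : B ⊆ C₂ := by
        rw [hC₂]
        intro z hz
        exact Finset.mem_insert_of_mem (Finset.mem_erase_of_ne_of_mem
          (fun h => hxB (h ▸ hz)) (hBC.subset hz))
      have hC₂card : C.card = C₂.card := by
        rw [hC₂, Finset.card_insert_of_notMem (fun h => hyC (Finset.mem_of_mem_erase h)),
          Finset.card_erase_of_mem hxC]
        omega
      have hC₂ne : C₂ ≠ C := by
        intro h
        exact hyC (h ▸ Finset.mem_insert_self y _)
      obtain ⟨π, hπB, hπC⟩ := DKS.transport hBC.subset hBC₂ rfl hC₂card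
      have hcards := DKS.card_pref_pair π B.card C.card hπB hπC
      set Y' := Ω.filter (fun σ => DKS.pref σ B.card = B ∧ DKS.pref σ C.card = C₂) with hY'
      have hYY' : Y.card = Y'.card := hcards
      have hdisj : Disjoint Y Y' := by
        rw [Finset.disjoint_left]
        intro σ hσ hσ'
        rw [hY, Finset.mem_filter] at hσ
        rw [hY', Finset.mem_filter] at hσ'
        exact hC₂ne (hσ'.2.2.symm.trans hσ.2.2)
      have hsub : Y ∪ Y' ⊆ T := by
        refine Finset.union_subset hYT ?_
        intro σ hσ
        rw [hY', Finset.mem_filter] at hσ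
        rw [hT, Finset.mem_filter]
        exact ⟨hσ.1, hσ.2.1⟩
      have := Finset.card_le_card hsub
      rw [Finset.card_union_of_disjoint hdisj] at this
      omega
    -- inclusion-exclusion
    have hIE : (X ∩ Y).card ≤ (T \ (X ∪ Y)).card := by
      have h1 := Finset.card_union_add_card_inter X Y
      have h2 : (T \ (X ∪ Y)).card = T.card - (X ∪ Y).card :=
        Finset.card_sdiff_of_subset (Finset.union_subset hXT hYT)
      have h3 : (X ∪ Y).card ≤ T.card := Finset.card_le_card (Finset.union_subset hXT hYT)
      omega
    -- badB B ⊆ X ∩ Y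
    have hbadX : badB B ⊆ X ∩ Y := by
      intro σ hσ
      rw [hbadB, Finset.mem_filter] at hσ
      obtain ⟨-, hσ3, hσB⟩ := hσ
      have hBG : B ∈ G σ := hmemG σ B hBF hσB
      obtain ⟨P, Q, R, hP, hQ, hR, hPQ, hQR⟩ := DKS.exists_chain3 (G σ) (htot σ) hσ3
      have hPF : P ∈ F := ((hGmem σ P).mp hP).1
      have hQF : Q ∈ F := ((hGmem σ Q).mp hQ).1
      have hRF : R ∈ F := ((hGmem σ R).mp hR).1
      -- B has a strict subset and a strict superset within G σ
      have hkey2 : (∃ P' ∈ G σ, P' ⊂ B) ∧ (∃ R' ∈ G σ, B ⊂ R') := by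
        rcases htot σ B hBG Q hQ with h | h
        · rcases eq_or_ne B Q with heq | hneq
          · exact ⟨⟨P, hP, heq ▸ hPQ⟩, ⟨R, hR, heq ▸ hQR⟩⟩
          · exfalso
            have hBQ : B ⊂ Q := h.ssubset_of_ne hneq
            refine hstar A hAF B hBF Q hQF R hRF hAB.ne ((hAB.trans hBQ).ne)
              ((hAB.trans (hBQ.trans hQR)).ne) hBQ.ne ((hBQ.trans hQR).ne) hQR.ne ?_
            refine Finset.union_subset ?_ ?_
            · exact Finset.subset_inter (hAB.subset.trans hBQ.subset)
                ((hAB.subset.trans hBQ.subset).trans hQR.subset)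
            · exact Finset.subset_inter hBQ.subset (hBQ.subset.trans hQR.subset)
        · rcases eq_or_ne Q B with heq | hneq
          · exact ⟨⟨P, hP, heq ▸ hPQ⟩, ⟨R, hR, heq ▸ hQR⟩⟩
          · exfalso
            have hQB : Q ⊂ B := h.ssubset_of_ne hneq
            refine hstar P hPF Q hQF B hBF C hCF hPQ.ne ((hPQ.trans hQB).ne)
              ((hPQ.trans (hQB.trans hBC)).ne) hQB.ne ((hQB.trans hBC).ne) hBC.ne ?_
            refine Finset.union_subset ?_ ?_
            · exact Finset.subset_inter (hPQ.subset.trans hQB.subset)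
                ((hPQ.subset.trans hQB.subset).trans hBC.subset)
            · exact Finset.subset_inter hQB.subset (hQB.subset.trans hBC.subset)
      obtain ⟨⟨P', hP'G, hP'B⟩, ⟨R', hR'G, hBR'⟩⟩ := hkey2
      have hP'F : P' ∈ F := ((hGmem σ P').mp hP'G).1
      have hR'F : R' ∈ F := ((hGmem σ R').mp hR'G).1
      have hP'A : P' = A := hAuniq B hBF C hCF hBC P' hP'F A hAF hP'B hAB
      have hR'C : R' = C := hCuniq B hBF A hAF hAB R' hR'F C hCF hBR' hBC
      rw [Finset.mem_inter, hX, hY, Finset.mem_filter, Finset.mem_filter]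
      refine ⟨⟨Finset.mem_univ _, hσB, ?_⟩, ⟨Finset.mem_univ _, hσB, ?_⟩⟩
      · rw [← hP'A]
        exact ((hGmem σ P').mp hP'G).2
      · rw [← hR'C]
        exact ((hGmem σ R').mp hR'G).2
    -- T \ (X ∪ Y) ⊆ goodB B
    have hgoodX : T \ (X ∪ Y) ⊆ goodB B := by
      intro σ hσ
      rw [Finset.mem_sdiff, Finset.mem_union] at hσ
      obtain ⟨hσT, hσn⟩ := hσ
      rw [hT, Finset.mem_filter] at hσT
      have hσB := hσT.2
      have hnA : DKS.pref σ A.card ≠ A := by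
        intro h
        exact hσn (Or.inl (by rw [hX, Finset.mem_filter]; exact ⟨Finset.mem_univ _, hσB, h⟩))
      have hnC : DKS.pref σ C.card ≠ C := by
        intro h
        exact hσn (Or.inr (by rw [hY, Finset.mem_filter]; exact ⟨Finset.mem_univ _, hσB, h⟩))
      have hBG : B ∈ G σ := hmemG σ B hBF hσB
      have hGone : G σ = {B} := by
        apply Finset.eq_singleton_iff_unique_mem.mpr
        refine ⟨hBG, fun S hS => ?_⟩
        have hSF : S ∈ F := ((hGmem σ S).mp hS).1
        rcases htot σ S hS B hBG with h | h
        · rcases eq_or_ne S B with heq | hneq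
          · exact heq
          · exfalso
            have hSB : S ⊂ B := h.ssubset_of_ne hneq
            have : S = A := hAuniq B hBF C hCF hBC S hSF A hAF hSB hAB
            exact hnA (this ▸ ((hGmem σ S).mp hS).2)
        · rcases eq_or_ne B S with heq | hneq
          · exact heq.symm
          · exfalso
            have hBS : B ⊂ S := h.ssubset_of_ne hneq
            have : S = C := hCuniq B hBF A hAF hAB S hSF C hCF hBS hBC
            exact hnC (this ▸ ((hGmem σ S).mp hS).2)
      rw [hgoodB, Finset.mem_filter]
      refine ⟨Finset.mem_univ _, ?_, hσB⟩
      rw [hc]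
      simp only []
      rw [hGone, Finset.card_singleton]
    calc (badB B).card ≤ (X ∩ Y).card := Finset.card_le_card hbadX
      _ ≤ (T \ (X ∪ Y)).card := hIE
      _ ≤ (goodB B).card := Finset.card_le_card hgoodX
  -- |Bad| ≤ |Good|
  have hBG : Bad.card ≤ Good.card := by
    calc Bad.card ≤ (Mid.biUnion badB).card := Finset.card_le_card hBadsub
      _ ≤ ∑ B ∈ Mid, (badB B).card := Finset.card_biUnion_le
      _ ≤ ∑ B ∈ Mid, (goodB B).card := Finset.sum_le_sum hkey
      _ = Good.card := (Finset.card_biUnion hgoodDisj).symm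
  -- Good ⊆ Ω \ Bad, with c = 1 on Good
  have hGoodc : ∀ σ ∈ Good, c σ = 1 := by
    intro σ hσ
    rw [hGood, Finset.mem_biUnion] at hσ
    obtain ⟨B, -, hσ⟩ := hσ
    rw [hgoodB, Finset.mem_filter] at hσ
    exact hσ.2.1
  -- main counting inequality: ∑ σ, c σ ≤ 2 * n!
  have hmain : ∑ σ ∈ Ω, c σ ≤ 2 * n.factorial := by
    have hGoodΩ : Good ⊆ Ω := Finset.subset_univ _
    have hBadΩ' : Bad ⊆ Ω \ Good := by
      intro σ hσ
      rw [Finset.mem_sdiff]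
      refine ⟨Finset.mem_univ _, fun hg => ?_⟩
      have h1 := hGoodc σ hg
      rw [hBad, Finset.mem_filter] at hσ
      omega
    have hsplit1 : ∑ σ ∈ Ω, c σ = ∑ σ ∈ Good, c σ + ∑ σ ∈ Ω \ Good, c σ := by
      rw [← Finset.sum_sdiff hGoodΩ]
      ring
    have hsplit2 : ∑ σ ∈ Ω \ Good, c σ = ∑ σ ∈ Bad, c σ + ∑ σ ∈ (Ω \ Good) \ Bad, c σ := by
      rw [← Finset.sum_sdiff hBadΩ']
      ring
    have h1 : ∑ σ ∈ Good, c σ = Good.card := by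
      rw [Finset.sum_congr rfl hGoodc, Finset.sum_const, smul_eq_mul, mul_one]
    have h2 : ∑ σ ∈ Bad, c σ = 3 * Bad.card := by
      rw [Finset.sum_congr rfl (fun σ hσ => ?_), Finset.sum_const, smul_eq_mul, mul_comm]
      rw [hBad, Finset.mem_filter] at hσ
      have := hc3 σ
      omega
    have h3 : ∑ σ ∈ (Ω \ Good) \ Bad, c σ ≤ 2 * ((Ω \ Good) \ Bad).card := by
      rw [mul_comm, ← smul_eq_mul, ← Finset.sum_const]
      apply Finset.sum_le_sum
      intro σ hσ
      rw [Finset.mem_sdiff, hBad, Finset.mem_filter] at hσ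
      have : ¬ (3 ≤ c σ) := fun h => hσ.2 ⟨Finset.mem_univ _, h⟩
      omega
    have hcard1 : (Ω \ Good).card = Ω.card - Good.card := Finset.card_sdiff_of_subset hGoodΩ
    have hcard2 : ((Ω \ Good) \ Bad).card = (Ω \ Good).card - Bad.card :=
      Finset.card_sdiff_of_subset hBadΩ'
    have hcard3 : Good.card ≤ Ω.card := Finset.card_le_card hGoodΩ
    have hcard4 : Bad.card ≤ (Ω \ Good).card := Finset.card_le_card hBadΩ'
    have hΩcard : Ω.card = n.factorial := by
      rw [hΩ, Finset.card_univ, Fintype.card_perm, Fintype.card_fin]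
    omega
  -- double counting: ∑ σ, c σ = ∑ S ∈ F, #T_S
  have hdouble : ∑ σ ∈ Ω, c σ
      = ∑ S ∈ F, (Ω.filter fun σ => DKS.pref σ S.card = S).card := by
    have h1 : ∀ σ, c σ = ∑ S ∈ F, if DKS.pref σ S.card = S then 1 else 0 := by
      intro σ
      rw [hc]
      simp only []
      rw [hG]
      simp only []
      rw [Finset.card_filter]
    rw [Finset.sum_congr rfl (fun σ _ => h1 σ), Finset.sum_comm]
    congr 1
    ext S
    rw [Finset.card_filter]
  -- final step
  have hfin : ∀ S ∈ F, (1 : ℚ) / (n.choose S.card)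
      = ((Ω.filter fun σ => DKS.pref σ S.card = S).card : ℚ) / (n.factorial : ℚ) := by
    intro S hS
    have hmul := DKS.card_T_mul_choose S
    have hchpos : 0 < n.choose S.card :=
      Nat.choose_pos (by simpa using Finset.card_le_univ S)
    rw [hΩ, div_eq_div_iff (ne_of_gt (by exact_mod_cast hchpos))
      (ne_of_gt (by exact_mod_cast n.factorial_pos)), one_mul]
    exact_mod_cast hmul.symm
  rw [Finset.sum_congr rfl hfin, ← Finset.sum_div]
  rw [div_le_iff₀ (by exact_mod_cast n.factorial_pos)]
  push_cast
  calc (∑ S ∈ F, ((Ω.filter fun σ => DKS.pref σ S.card = S).card : ℚ))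
      = ((∑ S ∈ F, (Ω.filter fun σ => DKS.pref σ S.card = S).card : ℕ) : ℚ) := by push_cast; rfl
    _ = ((∑ σ ∈ Ω, c σ : ℕ) : ℚ) := by rw [hdouble]
    _ ≤ ((2 * n.factorial : ℕ) : ℚ) := by exact_mod_cast hmain
    _ = 2 * (n.factorial : ℚ) := by push_cast; ring
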